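/- Let ℓ ≥ 2, let W be a vertex-weight function on v_1, …, v_n with W(v_1) ≥ … ≥ W(v_n) ≥ 0, and let t be an integer with 0 ≤ t ≤ t_{n,ℓ−1}, where t_{n,ℓ−1} is the number of edges of the Turán graph T_{n,ℓ−1}. Then there exists a subgraph B of B_ℓ(v_1, …, v_n) with exactly t edges such that w_min(B) ≥ w_min(G) for every K_ℓ-free graph G on {v_1, …, v_n} having exactly t edges. -/

import Mathlib

open Finset

/-- The complete `(ℓ-1)`-partite graph `B_ℓ(v_1, …, v_n)` on vertices indexed `0, …, n-1`,
where vertex `i` is placed in part `i mod (ℓ-1)`: vertices `i` and `j` are adjacent iff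
`i ≢ j (mod ℓ-1)`. With `r = n` parts... (here `r` is the number of parts, `ℓ - 1`).
For balanced parts this is the Turán graph `T_{n,r}`. -/
def modPartiteGraph (n r : ℕ) : SimpleGraph (Fin n) where
  Adj i j := (i : ℕ) % r ≠ (j : ℕ) % r
  symm := ⟨fun _ _ h => Ne.symm h⟩
  loopless := ⟨fun _ h => h rfl⟩

namespace MWTAux

open scoped Classical

variable {n : ℕ}

/-- Initial segment selection from a finset of naturals. -/
lemma exists_initial (t : ℕ) : ∀ S : Finset ℕ, t ≤ S.card →
    ∃ C : Finset ℕ, C ⊆ S ∧ C.card = t ∧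
      ∀ c : ℕ, (C.filter (· < c)).card = min t ((S.filter (· < c)).card) := by
  induction t with
  | zero => exact fun S _ => ⟨∅, empty_subset _, rfl, fun c => by simp⟩
  | succ s ih =>
    intro S hS
    have hne : S.Nonempty := card_pos.mp (by omega)
    set m := S.min' hne with hmdef
    have hm : m ∈ S := S.min'_mem hne
    obtain ⟨C', hsub, hcard, hfil⟩ := ih (S.erase m) (by rw [card_erase_of_mem hm]; omega)
    have hmC' : m ∉ C' := fun h => (mem_erase.mp (hsub h)).1 rfl
    refine ⟨insert m C', ?_, ?_, ?_⟩
    · exact insert_subset hm (hsub.trans (erase_subset _ _))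
    · rw [card_insert_of_notMem hmC', hcard]
    · intro c
      by_cases hc : m < c
      · have h1 : (insert m C').filter (· < c) = insert m (C'.filter (· < c)) := by
          rw [filter_insert, if_pos hc]
        have h2 : m ∉ C'.filter (· < c) := fun h => hmC' (mem_filter.mp h).1
        have h3 : (S.erase m).filter (· < c) = (S.filter (· < c)).erase m := by
          rw [filter_erase]
        have h4 : m ∈ S.filter (· < c) := mem_filter.mpr ⟨hm, hc⟩
        have h5 : ((S.erase m).filter (· < c)).card = (S.filter (· < c)).card - 1 := by
          rw [h3, card_erase_of_mem h4]
        have h6 : 1 ≤ (S.filter (· < c)).card := card_pos.mpr ⟨m, h4⟩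
        rw [h1, card_insert_of_notMem h2, hfil c, h5]
        omega
      · push_neg at hc
        have hSf : S.filter (· < c) = ∅ := by
          rw [filter_eq_empty_iff]
          intro x hx
          have := S.min'_le x hx
          simp only [not_lt]
          omega
        have hCf : (insert m C').filter (· < c) = ∅ := by
          rw [filter_eq_empty_iff]
          intro x hx
          have hxS : x ∈ S := (insert_subset hm (hsub.trans (erase_subset _ _))) hx
          have := S.min'_le x hxS
          simp only [not_lt]
          omega
        rw [hSf, hCf]
        simp

noncomputable def enc (n : ℕ) : Sym2 (Fin n) → ℕ :=
  Sym2.lift ⟨fun i j => n * max (i : ℕ) (j : ℕ) + min (i : ℕ) (j : ℕ),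
    fun i j => by simp [max_comm, min_comm]⟩

lemma enc_mk (a b : Fin n) : enc n s(a, b) = n * max (a : ℕ) (b : ℕ) + min (a : ℕ) (b : ℕ) := rfl

lemma enc_injective : Function.Injective (enc n) := by
  intro e e'
  induction e using Sym2.ind with | _ a b =>
  induction e' using Sym2.ind with | _ c d =>
  intro h
  rw [enc_mk, enc_mk] at h
  have hn : 0 < n := a.pos
  have hmin1 : min (a : ℕ) (b : ℕ) < n := lt_of_le_of_lt (min_le_left _ _) a.isLt
  have hmin2 : min (c : ℕ) (d : ℕ) < n := lt_of_le_of_lt (min_le_left _ _) c.isLt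
  have hmax : max (a : ℕ) (b : ℕ) = max (c : ℕ) (d : ℕ) := by
    have h2 := congrArg (· / n) h
    simpa [Nat.mul_add_div hn, Nat.div_eq_of_lt hmin1, Nat.div_eq_of_lt hmin2] using h2
  have hmin : min (a : ℕ) (b : ℕ) = min (c : ℕ) (d : ℕ) := by
    rw [hmax] at h; omega
  rw [Sym2.eq_iff]
  have hd : ((a : ℕ) = c ∧ (b : ℕ) = d) ∨ ((a : ℕ) = d ∧ (b : ℕ) = c) := by omega
  rcases hd with ⟨h1, h2⟩ | ⟨h1, h2⟩
  · exact Or.inl ⟨Fin.ext h1, Fin.ext h2⟩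
  · exact Or.inr ⟨Fin.ext h1, Fin.ext h2⟩

lemma enc_lt_iff (m : ℕ) (e : Sym2 (Fin n)) :
    enc n e < n * m ↔ ∀ i ∈ e, (i : ℕ) < m := by
  induction e using Sym2.ind with | _ a b =>
  rw [enc_mk]
  simp only [Sym2.mem_iff]
  constructor
  · intro h i hi
    have hmaxlt : max (a : ℕ) (b : ℕ) < m := by
      by_contra hk
      push_neg at hk
      have : n * m ≤ n * max (a : ℕ) (b : ℕ) := Nat.mul_le_mul_left n hk
      omega
    rcases hi with rfl | rfl <;> omega
  · intro h
    have ha := h a (Or.inl rfl)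
    have hb := h b (Or.inr rfl)
    have hmax : max (a : ℕ) (b : ℕ) + 1 ≤ m := by omega
    have h1 : n * (max (a : ℕ) (b : ℕ) + 1) ≤ n * m := Nat.mul_le_mul_left n hmax
    have hminlt : min (a : ℕ) (b : ℕ) < n := lt_of_le_of_lt (min_le_left _ _) a.isLt
    have h2 : n * (max (a : ℕ) (b : ℕ) + 1) = n * max (a : ℕ) (b : ℕ) + n := by ring
    omega

lemma card_filter_enc (E : Finset (Sym2 (Fin n))) (C : Finset ℕ) (hC : C ⊆ E.image (enc n))
    (p : ℕ → Prop) [DecidablePred p] [DecidablePred fun e => enc n e ∈ C ∧ p (enc n e)] :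
    (E.filter fun e => enc n e ∈ C ∧ p (enc n e)).card = (C.filter p).card := by
  have himg : (E.filter fun e => enc n e ∈ C ∧ p (enc n e)).image (enc n) = C.filter p := by
    ext x
    simp only [mem_image, mem_filter]
    constructor
    · rintro ⟨e, ⟨_, hc, hp⟩, rfl⟩
      exact ⟨hc, hp⟩
    · rintro ⟨hc, hp⟩
      obtain ⟨e, he, rfl⟩ := mem_image.mp (hC hc)
      exact ⟨e, ⟨he, hc, hp⟩, rfl⟩
  rw [← himg, card_image_of_injective _ enc_injective]

def below (n m : ℕ) (e : Sym2 (Fin n)) : Prop := ∀ i ∈ e, Fin.val i < m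

lemma comap_edge_card (G : SimpleGraph (Fin n)) (E : Finset (Sym2 (Fin n)))
    (hE : ∀ e, e ∈ E ↔ e ∈ G.edgeSet) (m : ℕ) (h : m ≤ n) :
    (G.comap (Fin.castLE h)).edgeSet.ncard
      = (E.filter (below n m)).card := by
  rw [show (G.comap (Fin.castLE h)).edgeSet.ncard
      = ((G.comap (Fin.castLE h)).edgeFinset).card from Set.ncard_eq_toFinset_card' _]
  apply Finset.card_bij (fun e _ => Sym2.map (Fin.castLE h) e)
  · intro e he
    induction e using Sym2.ind with | _ a b =>
    rw [SimpleGraph.mem_edgeFinset, SimpleGraph.mem_edgeSet] at he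
    rw [mem_filter, Sym2.map_pair_eq, hE, SimpleGraph.mem_edgeSet]
    refine ⟨he, ?_⟩
    intro i hi
    rcases Sym2.mem_iff.mp hi with rfl | rfl
    · exact a.isLt
    · exact b.isLt
  · intro e1 h1 e2 h2 heq
    exact Sym2.map.injective (Fin.castLE_injective h) heq
  · intro e he
    induction e using Sym2.ind with | _ a b =>
    rw [mem_filter, hE, SimpleGraph.mem_edgeSet] at he
    obtain ⟨hadj, hbelow⟩ := he
    have ha : (a : ℕ) < m := hbelow a (Sym2.mem_iff.mpr (Or.inl rfl))
    have hb : (b : ℕ) < m := hbelow b (Sym2.mem_iff.mpr (Or.inr rfl))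
    refine ⟨s(⟨(a : ℕ), ha⟩, ⟨(b : ℕ), hb⟩), ?_, ?_⟩
    · rw [SimpleGraph.mem_edgeFinset, SimpleGraph.mem_edgeSet]
      show G.Adj (Fin.castLE h ⟨(a : ℕ), ha⟩) (Fin.castLE h ⟨(b : ℕ), hb⟩)
      have h1 : Fin.castLE h ⟨(a : ℕ), ha⟩ = a := Fin.ext rfl
      have h2 : Fin.castLE h ⟨(b : ℕ), hb⟩ = b := Fin.ext rfl
      rw [h1, h2]; exact hadj
    · rfl

lemma pairs_card (G : SimpleGraph (Fin n)) (k : ℕ) (h : k + 1 ≤ n) :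
    (univ.filter fun p : Fin n × Fin n => G.Adj p.1 p.2 ∧ (p.1 : ℕ) ≤ k ∧ (p.2 : ℕ) ≤ k).card
      = 2 * (G.comap (Fin.castLE h)).edgeSet.ncard := by
  rw [show (G.comap (Fin.castLE h)).edgeSet.ncard
      = ((G.comap (Fin.castLE h)).edgeFinset).card from Set.ncard_eq_toFinset_card' _]
  rw [SimpleGraph.two_mul_card_edgeFinset]
  have hcongr : (univ.filter fun (x, y) => (G.comap (Fin.castLE h)).Adj x y)
      = (univ.filter fun p : Fin (k+1) × Fin (k+1) =>
          G.Adj (Fin.castLE h p.1) (Fin.castLE h p.2)) := by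
    apply filter_congr
    rintro ⟨x, y⟩ _
    exact Iff.rfl
  rw [hcongr]
  symm
  apply Finset.card_bij (fun (p : Fin (k+1) × Fin (k+1)) _ => (Fin.castLE h p.1, Fin.castLE h p.2))
  · rintro ⟨x, y⟩ hp
    simp only [mem_filter, mem_univ, true_and] at hp ⊢
    refine ⟨hp, ?_, ?_⟩
    · exact Nat.lt_succ_iff.mp x.isLt
    · exact Nat.lt_succ_iff.mp y.isLt
  · rintro ⟨x1, y1⟩ h1 ⟨x2, y2⟩ h2 heq
    have hx := congrArg Prod.fst heq
    have hy := congrArg Prod.snd heq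
    simp only at hx hy
    exact Prod.ext (Fin.castLE_injective h hx) (Fin.castLE_injective h hy)
  · rintro ⟨x, y⟩ hp
    simp only [mem_filter, mem_univ, true_and] at hp
    obtain ⟨hadj, hx, hy⟩ := hp
    have hx' : (x : ℕ) < k + 1 := Nat.lt_succ_of_le hx
    have hy' : (y : ℕ) < k + 1 := Nat.lt_succ_of_le hy
    refine ⟨(⟨(x : ℕ), hx'⟩, ⟨(y : ℕ), hy'⟩), ?_, ?_⟩
    · simp only [mem_filter, mem_univ, true_and]
      have h1 : Fin.castLE h ⟨(x : ℕ), hx'⟩ = x := Fin.ext rfl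
      have h2 : Fin.castLE h ⟨(y : ℕ), hy'⟩ = y := Fin.ext rfl
      rw [h1, h2]; exact hadj
    · exact Prod.ext (Fin.ext rfl) (Fin.ext rfl)

lemma cliqueFree_comap {ℓ : ℕ} {G : SimpleGraph (Fin n)} (hG : G.CliqueFree ℓ)
    (m : ℕ) (h : m ≤ n) : (G.comap (Fin.castLE h)).CliqueFree ℓ :=
  hG.comap (SimpleGraph.Embedding.comap (Fin.castLEEmb h) G).isContained

noncomputable def Wext (n : ℕ) (W : Fin n → ℝ) : ℕ → ℝ :=
  fun k => if h : k < n then W ⟨k, h⟩ else 0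

lemma Wext_eq_sum (W : Fin n → ℝ) {m : ℕ} (hm : m < n) :
    Wext n W m = ∑ k ∈ range n, if m ≤ k then Wext n W k - Wext n W (k + 1) else 0 := by
  rw [← sum_filter]
  have hfil : (range n).filter (fun k => m ≤ k) = Ico m n := by
    ext x; simp [mem_filter, mem_range, mem_Ico, and_comm]
  rw [hfil, Finset.sum_Ico_eq_sum_range]
  have hco : ∀ i ∈ range (n - m), Wext n W (m + i) - Wext n W (m + i + 1)
      = (fun j => Wext n W (m + j)) i - (fun j => Wext n W (m + j)) (i + 1) := by
    intro i _
    dsimp only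
    rw [Nat.add_assoc]
  rw [Finset.sum_congr rfl hco, Finset.sum_range_sub' (fun j => Wext n W (m + j))]
  have h1 : Wext n W (m + (n - m)) = 0 := by
    have hmn : m + (n - m) = n := by omega
    rw [hmn, Wext]
    simp
  rw [h1, add_zero, sub_zero]

lemma min_eq_Wext (W : Fin n → ℝ) (hmono : ∀ i j : Fin n, i ≤ j → W j ≤ W i) (i j : Fin n) :
    min (W i) (W j) = Wext n W (max (i : ℕ) (j : ℕ)) := by
  rcases le_total (i : ℕ) (j : ℕ) with h | h
  · have hij : i ≤ j := h
    rw [max_eq_right h, Wext, dif_pos j.isLt]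
    simp only [Fin.eta]
    exact min_eq_right (hmono i j hij)
  · have hij : j ≤ i := h
    rw [max_eq_left h, Wext, dif_pos i.isLt]
    simp only [Fin.eta]
    exact min_eq_left (hmono j i hij)

lemma double_ite (P : Fin n → Fin n → Prop) [∀ i j, Decidable (P i j)] (c : ℝ) :
    ∑ i : Fin n, ∑ j : Fin n, (if P i j then c else 0)
      = c * ((univ.filter fun p : Fin n × Fin n => P p.1 p.2).card : ℝ) := by
  rw [← Finset.sum_product', ← Finset.univ_product_univ]
  rw [← sum_filter, sum_const, nsmul_eq_mul, mul_comm]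

set_option maxHeartbeats 1600000 in
lemma sum_pairs (G : SimpleGraph (Fin n)) (W : Fin n → ℝ)
    (hmono : ∀ i j : Fin n, i ≤ j → W j ≤ W i) :
    ∑ i : Fin n, ∑ j : Fin n, (if G.Adj i j then min (W i) (W j) else 0)
      = ∑ k ∈ range n, (Wext n W k - Wext n W (k + 1)) *
          ((univ.filter fun p : Fin n × Fin n =>
            G.Adj p.1 p.2 ∧ (p.1 : ℕ) ≤ k ∧ (p.2 : ℕ) ≤ k).card : ℝ) := by
  have step1 : ∀ i j : Fin n, (if G.Adj i j then min (W i) (W j) else 0)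
      = ∑ k ∈ range n, (if G.Adj i j ∧ (i : ℕ) ≤ k ∧ (j : ℕ) ≤ k
          then Wext n W k - Wext n W (k + 1) else 0) := by
    intro i j
    by_cases hadj : G.Adj i j
    · simp only [hadj, true_and, if_true]
      rw [min_eq_Wext W hmono i j, Wext_eq_sum W (max_lt i.isLt j.isLt)]
      refine sum_congr rfl fun k _ => ?_
      simp only [max_le_iff]
    · simp [hadj]
  calc ∑ i : Fin n, ∑ j : Fin n, (if G.Adj i j then min (W i) (W j) else 0)
      = ∑ i : Fin n, ∑ j : Fin n, ∑ k ∈ range n,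
          (if G.Adj i j ∧ (i : ℕ) ≤ k ∧ (j : ℕ) ≤ k
            then Wext n W k - Wext n W (k + 1) else 0) := by
        exact sum_congr rfl fun i _ => sum_congr rfl fun j _ => step1 i j
    _ = ∑ i : Fin n, ∑ k ∈ range n, ∑ j : Fin n,
          (if G.Adj i j ∧ (i : ℕ) ≤ k ∧ (j : ℕ) ≤ k
            then Wext n W k - Wext n W (k + 1) else 0) := by
        exact sum_congr rfl fun i _ => Finset.sum_comm
    _ = ∑ k ∈ range n, ∑ i : Fin n, ∑ j : Fin n,
          (if G.Adj i j ∧ (i : ℕ) ≤ k ∧ (j : ℕ) ≤ k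
            then Wext n W k - Wext n W (k + 1) else 0) := by rw [Finset.sum_comm]
    _ = ∑ k ∈ range n, (Wext n W k - Wext n W (k + 1)) *
          ((univ.filter fun p : Fin n × Fin n =>
            G.Adj p.1 p.2 ∧ (p.1 : ℕ) ≤ k ∧ (p.2 : ℕ) ≤ k).card : ℝ) := by
        exact sum_congr rfl fun k _ => double_ite _ _

end MWTAux

open MWTAux in
open scoped Classical in
set_option maxHeartbeats 1600000 in
/-- For `ℓ ≥ 2`, vertex weights `W(v_1) ≥ … ≥ W(v_n) ≥ 0` (vertex `i : Fin n`
standing for `v_{i+1}`), and `0 ≤ t ≤ t_{n,ℓ-1}` (the number of edges of the Turán graph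
`T_{n,ℓ-1}`, which is `modPartiteGraph n (ℓ-1)`), there is a subgraph `B` of
`B_ℓ(v_1, …, v_n) = modPartiteGraph n (ℓ-1)` with exactly `t` edges such that
`w_min(B) ≥ w_min(G)` for every `K_ℓ`-free graph `G` on the `n` vertices with exactly
`t` edges. Graph weights are expressed as half the sum over ordered pairs. -/
theorem min_weight_turan_fixed_edges (n ℓ t : ℕ) (hℓ : 2 ≤ ℓ) (W : Fin n → ℝ)
    (hmono : ∀ i j : Fin n, i ≤ j → W j ≤ W i) (hnn : ∀ i, 0 ≤ W i)
    (ht : t ≤ (modPartiteGraph n (ℓ - 1)).edgeSet.ncard) :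
    ∃ B : SimpleGraph (Fin n), B ≤ modPartiteGraph n (ℓ - 1) ∧ B.edgeSet.ncard = t ∧
      ∀ G : SimpleGraph (Fin n), G.CliqueFree ℓ → G.edgeSet.ncard = t →
        (∑ i : Fin n, ∑ j : Fin n, if G.Adj i j then min (W i) (W j) else 0) / 2 ≤
        (∑ i : Fin n, ∑ j : Fin n, if B.Adj i j then min (W i) (W j) else 0) / 2 := by
  classical
  set r := ℓ - 1 with hrdef
  have hr : 0 < r := by omega
  have hℓr : r + 1 = ℓ := by omega
  set T := modPartiteGraph n r with hT
  have hTfin : T.edgeSet.ncard = T.edgeFinset.card := by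
    rw [← SimpleGraph.coe_edgeFinset, Set.ncard_coe_finset]
  set S : Finset ℕ := T.edgeFinset.image (enc n) with hS
  have hScard : S.card = T.edgeFinset.card := card_image_of_injective _ enc_injective
  have htS : t ≤ S.card := by rw [hScard, ← hTfin]; exact ht
  obtain ⟨C, hCsub, hCcard, hCfil⟩ := exists_initial t S htS
  set D : Finset (Sym2 (Fin n)) := T.edgeFinset.filter (fun e => enc n e ∈ C) with hD
  have hDfil : ∀ (p : ℕ → Prop), ∀ _ : DecidablePred p,
      (D.filter fun e => p (enc n e)).card = (C.filter p).card := by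
    intro p _
    rw [hD, filter_filter]
    exact card_filter_enc T.edgeFinset C hCsub p
  have hDcard : D.card = t := by
    rw [← hCcard]
    have h2 := hDfil (fun _ => True) inferInstance
    simpa using h2
  have hDedge : ∀ e ∈ D, e ∈ T.edgeSet := fun e he =>
    SimpleGraph.mem_edgeFinset.mp (filter_subset _ _ he)
  set B := SimpleGraph.fromEdgeSet (↑D : Set (Sym2 (Fin n))) with hB
  clear_value B
  have hBedgeSet : B.edgeSet = ↑D := by
    rw [hB, SimpleGraph.edgeSet_fromEdgeSet]
    ext e
    simp only [Set.mem_diff, Finset.mem_coe, Set.mem_setOf_eq]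
    exact ⟨fun h => h.1, fun h => ⟨h, T.not_isDiag_of_mem_edgeSet (hDedge e h)⟩⟩
  have hBedgeFin : B.edgeFinset = D := by
    ext e
    rw [SimpleGraph.mem_edgeFinset, hBedgeSet]
    exact Finset.mem_coe
  refine ⟨B, ?_, ?_, ?_⟩
  · intro a b hab
    rw [hB, SimpleGraph.fromEdgeSet_adj] at hab
    have h := hDedge _ hab.1
    rwa [SimpleGraph.mem_edgeSet] at h
  · rw [hBedgeSet, Set.ncard_coe_finset, hDcard]
  · intro G hGfree hGt
    have key : (∑ i : Fin n, ∑ j : Fin n, if G.Adj i j then min (W i) (W j) else 0)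
        ≤ (∑ i : Fin n, ∑ j : Fin n, if B.Adj i j then min (W i) (W j) else 0) := by
      rw [sum_pairs G W hmono, sum_pairs B W hmono]
      apply sum_le_sum
      intro k hk
      rw [mem_range] at hk
      have hd : 0 ≤ Wext n W k - Wext n W (k + 1) := by
        simp only [Wext]
        by_cases h1 : k + 1 < n
        · rw [dif_pos hk, dif_pos h1]
          have := hmono ⟨k, hk⟩ ⟨k + 1, h1⟩ (Fin.mk_le_mk.mpr (Nat.le_succ k))
          linarith
        · rw [dif_pos hk, dif_neg h1]
          simpa using hnn ⟨k, hk⟩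
      apply mul_le_mul_of_nonneg_left _ hd
      have hk1 : k + 1 ≤ n := hk
      have hTeq : T.comap (Fin.castLE hk1) = SimpleGraph.turanGraph (k + 1) r := by
        ext i j
        exact Iff.rfl
      have hEB : ∀ e, e ∈ D ↔ e ∈ B.edgeSet := by
        intro e; rw [hBedgeSet]; exact Finset.mem_coe.symm
      have hET : ∀ e, e ∈ T.edgeFinset ↔ e ∈ T.edgeSet := fun e => SimpleGraph.mem_edgeFinset
      have hEG : ∀ e, e ∈ G.edgeFinset ↔ e ∈ G.edgeSet := fun e => SimpleGraph.mem_edgeFinset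
      have heB : (B.comap (Fin.castLE hk1)).edgeSet.ncard
          = min t (T.comap (Fin.castLE hk1)).edgeSet.ncard := by
        rw [comap_edge_card B D hEB (k + 1) hk1, comap_edge_card T T.edgeFinset hET (k + 1) hk1]
        calc (D.filter (below n (k + 1))).card
            = (D.filter fun e => enc n e < n * (k + 1)).card := by
              refine congrArg _ (filter_congr fun e _ => ?_)
              exact (enc_lt_iff (k + 1) e).symm
          _ = (C.filter (· < n * (k + 1))).card := hDfil (fun x => x < n * (k + 1)) inferInstance
          _ = min t ((S.filter (· < n * (k + 1))).card) := hCfil _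
          _ = min t ((T.edgeFinset.filter (below n (k + 1))).card) := by
              congr 1
              rw [show T.edgeFinset.filter (below n (k + 1))
                  = T.edgeFinset.filter (fun e => enc n e < n * (k + 1)) from
                filter_congr fun e _ => (enc_lt_iff (k + 1) e).symm]
              rw [show T.edgeFinset.filter (fun e => enc n e < n * (k + 1))
                  = T.edgeFinset.filter (fun e => enc n e ∈ S ∧ enc n e < n * (k + 1)) from
                filter_congr fun e he =>
                  ⟨fun hlt => ⟨mem_image_of_mem _ he, hlt⟩, fun h => h.2⟩]
              exact (card_filter_enc T.edgeFinset S subset_rfl _).symm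
      have heG1 : (G.comap (Fin.castLE hk1)).edgeSet.ncard ≤ t := by
        rw [comap_edge_card G G.edgeFinset hEG (k + 1) hk1]
        calc (G.edgeFinset.filter (below n (k + 1))).card
            ≤ G.edgeFinset.card := card_le_card (filter_subset _ _)
          _ = t := by rw [← Set.ncard_coe_finset, SimpleGraph.coe_edgeFinset, hGt]
      have heG2 : (G.comap (Fin.castLE hk1)).edgeSet.ncard
          ≤ (T.comap (Fin.castLE hk1)).edgeSet.ncard := by
        have hfree : (G.comap (Fin.castLE hk1)).CliqueFree (r + 1) := by
          rw [hℓr]; exact cliqueFree_comap hGfree _ hk1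
        have h0 := (SimpleGraph.isTuranMaximal_turanGraph hr).2
          (G' := G.comap (Fin.castLE hk1)) hfree
        calc (G.comap (Fin.castLE hk1)).edgeSet.ncard
            = ((G.comap (Fin.castLE hk1)).edgeFinset).card := Set.ncard_eq_toFinset_card' _
          _ ≤ ((SimpleGraph.turanGraph (k + 1) r).edgeFinset).card := h0
          _ = (SimpleGraph.turanGraph (k + 1) r).edgeSet.ncard :=
              (Set.ncard_eq_toFinset_card' _).symm
          _ = (T.comap (Fin.castLE hk1)).edgeSet.ncard := by rw [hTeq]
      have hmain : (univ.filter fun p : Fin n × Fin n =>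
            G.Adj p.1 p.2 ∧ (p.1 : ℕ) ≤ k ∧ (p.2 : ℕ) ≤ k).card
          ≤ (univ.filter fun p : Fin n × Fin n =>
            B.Adj p.1 p.2 ∧ (p.1 : ℕ) ≤ k ∧ (p.2 : ℕ) ≤ k).card := by
        rw [pairs_card G k hk1, pairs_card B k hk1]
        apply Nat.mul_le_mul_left
        rw [heB]
        exact le_min heG1 heG2
      exact_mod_cast hmain
    linarith
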